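/- Let n ∈ ℕ be even and let A = {a_1 < ... < a_n} be a convex set of reals. Define M = {(a_k, a_{n/2+k}) : 1 ≤ k ≤ n/2}. Then M is a matching of size n/2 and the set {a_{n/2+k} + a_k : 1 ≤ k ≤ n/2} is convex. -/
import Mathlib


/-- `M ⊆ A × A` is a matching if each element of `A` occurs in at most one coordinate of
at most one pair of `M`. -/
def IsMatching (A : Finset ℝ) (M : Finset (ℝ × ℝ)) : Prop :=
  (∀ p ∈ M, p.1 ∈ A ∧ p.2 ∈ A ∧ p.1 ≠ p.2) ∧
  (∀ p ∈ M, ∀ q ∈ M, p ≠ q → p.1 ≠ q.1 ∧ p.1 ≠ q.2 ∧ p.2 ≠ q.1 ∧ p.2 ≠ q.2)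

/-- for even `n` and a convex set `A = {a_1 < ... < a_n}` (given as a
strictly increasing convex sequence on indices `1, ..., n`), the set
`M = {(a_k, a_{n/2+k}) : 1 ≤ k ≤ n/2}` is a matching of size `n/2` and the sums
`s_k = a_{n/2+k} + a_k` form a convex set. -/
theorem statement15 (n : ℕ) (hn : Even n) (hn0 : 0 < n) (a : ℕ → ℝ)
    (ha_mono : ∀ i, 1 ≤ i → i + 1 ≤ n → a i < a (i + 1))
    (ha_conv : ∀ i, 2 ≤ i → i + 1 ≤ n → a (i + 1) - a i > a i - a (i - 1))
    (A : Finset ℝ) (hA : A = (Finset.Icc 1 n).image a)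
    (M : Finset (ℝ × ℝ))
    (hM : M = (Finset.Icc 1 (n / 2)).image (fun k => (a k, a (n / 2 + k))))
    (s : ℕ → ℝ) (hs : ∀ k, s k = a (n / 2 + k) + a k) :
    IsMatching A M ∧ M.card = n / 2 ∧
    (∀ k, 2 ≤ k → k + 1 ≤ n / 2 → s (k + 1) - s k > s k - s (k - 1)) := by
  obtain ⟨m, hmdef⟩ := hn
  have hn2 : n = 2 * m := by omega
  have hm2 : n / 2 = m := by omega
  have hm1 : 1 ≤ m := by omega
  have hlt : ∀ i j, 1 ≤ i → i < j → j ≤ n → a i < a j := by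
    intro i j hi hij hj
    induction j with
    | zero => omega
    | succ j ih =>
      rcases Nat.lt_or_ge i j with h | h
      · exact lt_trans (ih h (by omega)) (ha_mono j (by omega) hj)
      · have : i = j := by omega
        subst this; exact ha_mono i hi hj
  have hinj : ∀ i j, 1 ≤ i → 1 ≤ j → i ≤ n → j ≤ n → a i = a j → i = j := by
    intro i j hi hj hin hjn he
    rcases lt_trichotomy i j with hl | hl | hl
    · exact absurd he (ne_of_lt (hlt i j hi hl hjn))
    · exact hl
    · exact absurd he.symm (ne_of_lt (hlt j i hj hl hin))
  have hmemM : ∀ p ∈ M, ∃ k, 1 ≤ k ∧ k ≤ m ∧ p = (a k, a (m + k)) := by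
    intro p hp
    rw [hM, Finset.mem_image] at hp
    obtain ⟨k, hk, hke⟩ := hp
    rw [Finset.mem_Icc] at hk
    exact ⟨k, hk.1, by omega, by rw [← hke, hm2]⟩
  refine ⟨⟨?_, ?_⟩, ?_, ?_⟩
  · intro p hp
    obtain ⟨k, hk1, hk2, hpe⟩ := hmemM p hp
    subst hpe
    refine ⟨?_, ?_, ?_⟩
    · rw [hA, Finset.mem_image]
      exact ⟨k, Finset.mem_Icc.mpr ⟨hk1, by omega⟩, rfl⟩
    · rw [hA, Finset.mem_image]
      exact ⟨m + k, Finset.mem_Icc.mpr ⟨by omega, by omega⟩, rfl⟩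
    · exact ne_of_lt (hlt k (m + k) hk1 (by omega) (by omega))
  · intro p hp q hq hpq
    obtain ⟨k, hk1, hk2, hpe⟩ := hmemM p hp
    obtain ⟨l, hl1, hl2, hqe⟩ := hmemM q hq
    subst hpe; subst hqe
    have hkl : k ≠ l := fun h => hpq (by rw [h])
    refine ⟨?_, ?_, ?_, ?_⟩ <;> simp only [Prod.fst, Prod.snd] <;> intro he
    · exact hkl (hinj k l hk1 hl1 (by omega) (by omega) he)
    · have := hinj k (m + l) hk1 (by omega) (by omega) (by omega) he; omega
    · have := hinj (m + k) l (by omega) hl1 (by omega) (by omega) he; omega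
    · have := hinj (m + k) (m + l) (by omega) (by omega) (by omega) (by omega) he; omega
  · rw [hM]
    rw [Finset.card_image_of_injOn, Nat.card_Icc]
    · omega
    · intro i hi j hj he
      simp only [Finset.coe_Icc, Set.mem_Icc] at hi hj
      have : a i = a j := congrArg Prod.fst he
      exact hinj i j hi.1 hj.1 (by omega) (by omega) this
  · intro k hk2 hkm
    rw [hm2] at hkm
    have h1 : a (k + 1) - a k > a k - a (k - 1) := ha_conv k hk2 (by omega)
    have h2 : a (m + k + 1) - a (m + k) > a (m + k) - a (m + k - 1) :=
      ha_conv (m + k) (by omega) (by omega)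
    have e1 : n / 2 + (k + 1) = m + k + 1 := by omega
    have e2 : n / 2 + k = m + k := by omega
    have e3 : n / 2 + (k - 1) = m + k - 1 := by omega
    rw [hs, hs, hs, e1, e2, e3]
    linarith
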